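/- Let h > 0 and let α* ∈ (0, (s 0)²/2) be a minimizer of T_h over [0, (s 0)²/2]. Then α* satisfies the optimality condition α* (s 0)² / ((s 0)² + α*)³ = h · ∑_{i < r} (s i)⁴ / ((s i)² + α*)³. -/

import Mathlib

/-- The PRO function `T_h(α) = f₁(α) + h·f₂(α)` for Tikhonov regularization. -/
noncomputable def proT (r : ℕ) (hr : 0 < r) (s : Fin r → ℝ) (h : ℝ) (α : ℝ) : ℝ :=
  α ^ 2 / (α + (s ⟨0, hr⟩) ^ 2) ^ 2 + h * ∑ i, (s i) ^ 4 / (α + (s i) ^ 2) ^ 2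

/-- An interior minimizer `α* ∈ (0, (s 0)²/2)` of `T_h` over `[0, (s 0)²/2]`
satisfies the optimality condition
`α* (s 0)² / ((s 0)² + α*)³ = h · ∑_{i<r} (s i)⁴ / ((s i)² + α*)³`. -/
theorem proT_optimality_condition (r : ℕ) (hr : 0 < r) (s : Fin r → ℝ)
    (hpos : ∀ i, 0 < s i) (hmax : ∀ i, s i ≤ s ⟨0, hr⟩)
    (h : ℝ) (hh : 0 < h)
    (a : ℝ) (ha : a ∈ Set.Ioo (0 : ℝ) ((s ⟨0, hr⟩) ^ 2 / 2))
    (hamin : IsMinOn (proT r hr s h) (Set.Icc 0 ((s ⟨0, hr⟩) ^ 2 / 2)) a) :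
    a * (s ⟨0, hr⟩) ^ 2 / ((s ⟨0, hr⟩) ^ 2 + a) ^ 3
      = h * ∑ i, (s i) ^ 4 / ((s i) ^ 2 + a) ^ 3 := by
  set c : ℝ := (s ⟨0, hr⟩) ^ 2 with hc
  have hcpos : 0 < c := pow_pos (hpos _) 2
  have hapos : 0 < a := ha.1
  have hden : ∀ i : Fin r, a + (s i) ^ 2 ≠ 0 := fun i =>
    ne_of_gt (add_pos hapos (pow_pos (hpos i) 2))
  have hdc : a + c ≠ 0 := ne_of_gt (add_pos hapos hcpos)
  -- derivative of the first term
  have h1 : HasDerivAt (fun α : ℝ => α ^ 2 / (α + c) ^ 2)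
      (2 * a * c / (a + c) ^ 3) a := by
    have hf : HasDerivAt (fun α : ℝ => α ^ 2) (2 * a) a := by
      simpa using (hasDerivAt_pow 2 a)
    have hg : HasDerivAt (fun α : ℝ => (α + c) ^ 2) (2 * (a + c)) a := by
      have : HasDerivAt (fun α : ℝ => α + c) 1 a := (hasDerivAt_id a).add_const c
      simpa using (this.fun_pow 2)
    have := hf.fun_div hg (pow_ne_zero 2 hdc)
    refine this.congr_deriv ?_
    rw [eq_comm, div_eq_div_iff (pow_ne_zero 3 hdc) (pow_ne_zero 2 (pow_ne_zero 2 hdc))]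
    ring
  -- derivative of each summand
  have h2 : ∀ i : Fin r, HasDerivAt (fun α : ℝ => (s i) ^ 4 / (α + (s i) ^ 2) ^ 2)
      (-2 * (s i) ^ 4 / (a + (s i) ^ 2) ^ 3) a := by
    intro i
    have hf : HasDerivAt (fun _ : ℝ => (s i) ^ 4) 0 a := hasDerivAt_const a _
    have hg : HasDerivAt (fun α : ℝ => (α + (s i) ^ 2) ^ 2) (2 * (a + (s i) ^ 2)) a := by
      have : HasDerivAt (fun α : ℝ => α + (s i) ^ 2) 1 a :=
        (hasDerivAt_id a).add_const _
      simpa using (this.fun_pow 2)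
    have := hf.fun_div hg (pow_ne_zero 2 (hden i))
    refine this.congr_deriv ?_
    rw [eq_comm, div_eq_div_iff (pow_ne_zero 3 (hden i)) (pow_ne_zero 2 (pow_ne_zero 2 (hden i)))]
    ring
  have hsum : HasDerivAt (fun α : ℝ => ∑ i, (s i) ^ 4 / (α + (s i) ^ 2) ^ 2)
      (∑ i, -2 * (s i) ^ 4 / (a + (s i) ^ 2) ^ 3) a := by
    exact HasDerivAt.fun_sum (fun i _ => h2 i)
  have hT : HasDerivAt (proT r hr s h)
      (2 * a * c / (a + c) ^ 3 + h * ∑ i, -2 * (s i) ^ 4 / (a + (s i) ^ 2) ^ 3) a :=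
    h1.add (hsum.const_mul h)
  -- a is an interior point of the interval
  have hnhds : Set.Icc (0 : ℝ) (c / 2) ∈ nhds a := by
    have : Set.Ioo (0 : ℝ) (c / 2) ∈ nhds a :=
      Ioo_mem_nhds ha.1 ha.2
    exact Filter.mem_of_superset this Set.Ioo_subset_Icc_self
  have hloc : IsLocalMin (proT r hr s h) a := hamin.isLocalMin hnhds
  have hzero := hloc.hasDerivAt_eq_zero hT
  have hsum_eq : ∑ i, -2 * (s i) ^ 4 / (a + (s i) ^ 2) ^ 3
      = -2 * ∑ i, (s i) ^ 4 / ((s i) ^ 2 + a) ^ 3 := by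
    rw [Finset.mul_sum]
    refine Finset.sum_congr rfl fun i _ => ?_
    rw [add_comm a]
    ring
  rw [hsum_eq] at hzero
  have hfirst : a * c / (c + a) ^ 3 = 2 * a * c / (a + c) ^ 3 / 2 := by
    rw [add_comm c a]; ring
  rw [hfirst]
  linarith [hzero]
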